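/- Let G be an infinite group generated by a finite symmetric set S. For r ∈ ℕ let B_r = (S ∪ {1})^r and for n ≥ 1 let ρ(n) = min { r ∈ ℕ : |B_r| ≥ n }. For a nonempty finite subset A ⊆ G define the edge boundary ∂A = { (a,s) ∈ A × S : a·s ∉ A }. Then for every nonempty finite A ⊆ G, |∂A| ≥ |A| / (2 ρ(2|A|)). -/

import Mathlib

open Pointwise


/-- Translation defect lemma: for `g` in the `k`-th power of `S ∪ {1}`, the number of
`a ∈ A` with `a * g⁻¹ ∉ A` is at most `k` times the boundary size. -/
lemma csc_translate_aux {G : Type*} [Group G] [DecidableEq G] (S : Set G) (hsym : S⁻¹ = S)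
    (A' : Finset G) (P : Finset (G × G))
    (hP : ∀ a s : G, a ∈ A' → s ∈ S → a * s ∉ A' → (a, s) ∈ P) :
    ∀ (k : ℕ) (g : G), g ∈ (S ∪ {1} : Set G) ^ k →
      (A'.filter (fun a => a * g⁻¹ ∉ A')).card ≤ k * P.card := by
  intro k
  induction k with
  | zero =>
    intro g hg
    simp only [pow_zero, Set.mem_one] at hg
    subst hg
    simp only [inv_one, mul_one, Nat.zero_eq, Nat.zero_mul]
    rw [Finset.filter_eq_empty_iff.mpr (fun _ ha => not_not_intro ha)]
    simp
  | succ k ih =>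
    intro g hg
    rw [pow_succ] at hg
    obtain ⟨h, hh, t, ht, rfl⟩ := hg
    -- a * (h*t)⁻¹ = a * t⁻¹ * h⁻¹
    have hsubset : A'.filter (fun a => a * (h * t)⁻¹ ∉ A') ⊆
        (A'.filter (fun a => a * t⁻¹ ∉ A')) ∪
        (A'.filter (fun a => a * t⁻¹ ∈ A' ∧ a * t⁻¹ * h⁻¹ ∉ A')) := by
      intro a ha
      simp only [Finset.mem_filter, Finset.mem_union] at ha ⊢
      by_cases hc : a * t⁻¹ ∈ A'
      · right
        refine ⟨ha.1, hc, ?_⟩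
        have := ha.2
        rwa [mul_inv_rev, ← mul_assoc] at this
      · left; exact ⟨ha.1, hc⟩
    have h1 : (A'.filter (fun a => a * t⁻¹ ∉ A')).card ≤ P.card := by
      rcases ht with ht | ht
      · -- t ∈ S, inject a ↦ (a, t⁻¹)
        apply Finset.card_le_card_of_injOn (fun a => (a, t⁻¹))
        · intro a ha
          simp only [Finset.mem_coe, Finset.mem_filter] at ha
          exact hP a t⁻¹ ha.1 (by rw [← hsym]; exact Set.inv_mem_inv.mpr ht) ha.2
        · intro a _ b _ hab
          exact (Prod.mk.injEq _ _ _ _ ▸ hab).1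
      · simp only [Set.mem_singleton_iff] at ht
        subst ht
        simp only [inv_one, mul_one]
        rw [Finset.filter_eq_empty_iff.mpr (fun _ ha => not_not_intro ha)]
        simp
    have h2 : (A'.filter (fun a => a * t⁻¹ ∈ A' ∧ a * t⁻¹ * h⁻¹ ∉ A')).card ≤
        (A'.filter (fun a => a * h⁻¹ ∉ A')).card := by
      apply Finset.card_le_card_of_injOn (fun a => a * t⁻¹)
      · intro a ha
        simp only [Finset.mem_coe, Finset.mem_filter] at ha ⊢
        exact ⟨ha.2.1, ha.2.2⟩
      · intro a _ b _ hab
        exact mul_right_cancel hab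
    calc (A'.filter (fun a => a * (h * t)⁻¹ ∉ A')).card
        ≤ _ := Finset.card_le_card hsubset
      _ ≤ (A'.filter (fun a => a * t⁻¹ ∉ A')).card +
          (A'.filter (fun a => a * t⁻¹ ∈ A' ∧ a * t⁻¹ * h⁻¹ ∉ A')).card :=
          Finset.card_union_le _ _
      _ ≤ P.card + k * P.card := Nat.add_le_add h1 (h2.trans (ih h hh))
      _ = (k + 1) * P.card := by ring

/-- **Coulhon–Saloff-Coste isoperimetric inequality.** Let `G` be an infinite group
generated by a finite symmetric set `S`, with balls `B r = (S ∪ {1}) ^ r` and inverse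
growth function `ρ n = min {r : |B r| ≥ n}`. Then for every nonempty finite `A ⊆ G`,
the edge boundary `∂A = {(a,s) ∈ A × S : a * s ∉ A}` satisfies
`|∂A| ≥ |A| / (2 ρ(2|A|))`. -/
theorem coulhon_saloff_coste {G : Type*} [Group G] [Infinite G] (S : Set G)
    (hfin : S.Finite) (hsym : S⁻¹ = S) (hgen : Subgroup.closure S = ⊤)
    (ρ : ℕ → ℕ) (hρ : ∀ n : ℕ, ρ n = sInf {r : ℕ | n ≤ ((S ∪ {1} : Set G) ^ r).ncard})
    (A : Set G) (hA : A.Finite) (hAne : A.Nonempty) :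
    (A.ncard : ℝ) / (2 * ρ (2 * A.ncard)) ≤
      ({p : G × G | p.1 ∈ A ∧ p.2 ∈ S ∧ p.1 * p.2 ∉ A}.ncard : ℝ) := by
  classical
  set r := ρ (2 * A.ncard) with hrdef
  rcases Nat.eq_zero_or_pos r with hr0 | hrpos
  · rw [hr0]
    norm_num
  -- the boundary is finite
  have hPfin : ({p : G × G | p.1 ∈ A ∧ p.2 ∈ S ∧ p.1 * p.2 ∉ A}).Finite := by
    apply Set.Finite.subset (hA.prod hfin)
    rintro ⟨a, s⟩ ⟨h1, h2, _⟩; exact ⟨h1, h2⟩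
  set A' := hA.toFinset with hA'def
  set P := hPfin.toFinset with hPdef
  have hAcard : A.ncard = A'.card := Set.ncard_eq_toFinset_card _ hA
  have hPcard : ({p : G × G | p.1 ∈ A ∧ p.2 ∈ S ∧ p.1 * p.2 ∉ A}).ncard = P.card :=
    Set.ncard_eq_toFinset_card _ hPfin
  have hA'pos : 0 < A'.card := by
    rw [Finset.card_pos]
    exact ⟨hAne.choose, (Set.Finite.mem_toFinset hA).mpr hAne.choose_spec⟩
  -- the ball of radius r has at least 2|A| elements
  have hBfin : ((S ∪ {1} : Set G) ^ r).Finite := by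
    induction r with
    | zero => simp
    | succ k ih => rw [pow_succ]; exact ih.mul (hfin.union (Set.finite_singleton 1))
  set B := hBfin.toFinset with hBdef
  have hBr : 2 * A'.card ≤ B.card := by
    have hne : {r' : ℕ | 2 * A.ncard ≤ ((S ∪ {1} : Set G) ^ r').ncard}.Nonempty := by
      by_contra h
      rw [Set.not_nonempty_iff_eq_empty] at h
      have h2 := hρ (2 * A.ncard)
      rw [h, Nat.sInf_empty] at h2
      omega
    have hmem := Nat.sInf_mem hne
    rw [← hρ (2 * A.ncard), ← hrdef] at hmem
    have : ((S ∪ {1} : Set G) ^ r).ncard = B.card := Set.ncard_eq_toFinset_card _ hBfin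
    rw [← this, ← hAcard]
    exact hmem
  -- pigeonhole: there is g ∈ B with small overlap
  have hkey : ∃ g ∈ B, 2 * (A'.filter (fun a => a * g⁻¹ ∈ A')).card ≤ A'.card := by
    by_contra hcon
    push_neg at hcon
    -- T is the set of incidences
    set T := (B ×ˢ A').filter (fun p => p.2 * p.1⁻¹ ∈ A') with hT
    have hTcard : T.card = ∑ g ∈ B, (A'.filter (fun a => a * g⁻¹ ∈ A')).card := by
      rw [Finset.card_eq_sum_card_fiberwise (f := Prod.fst) (t := B)
        (fun p hp => (Finset.mem_filter.mp hp).1 |> Finset.mem_product.mp |>.1)]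
      apply Finset.sum_congr rfl
      intro g hg
      apply Finset.card_bij (fun p _ => p.2)
      · intro p hp
        simp only [Finset.mem_filter, Finset.mem_product, hT] at hp ⊢
        obtain ⟨⟨⟨_, h2⟩, h3⟩, h4⟩ := hp
        rw [h4] at h3
        exact ⟨h2, h3⟩
      · intro p hp q hq hpq
        simp only [Finset.mem_filter, hT] at hp hq
        exact Prod.ext (hp.2.trans hq.2.symm) hpq
      · intro a ha
        simp only [Finset.mem_filter] at ha
        exact ⟨(g, a), by simp [hT, hg, ha.1, ha.2], rfl⟩
    have hTle : T.card ≤ A'.card * A'.card := by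
      calc T.card ≤ (A' ×ˢ A').card := by
            apply Finset.card_le_card_of_injOn (fun p => (p.2, p.2 * p.1⁻¹))
            · intro p hp
              simp only [Finset.mem_coe, Finset.mem_filter, Finset.mem_product, hT] at hp ⊢
              exact ⟨hp.1.2, hp.2⟩
            · intro p hp q hq hpq
              simp only [Prod.mk.injEq] at hpq
              obtain ⟨h1, h2⟩ := hpq
              rw [h1] at h2
              have := mul_left_cancel h2
              exact Prod.ext (inv_injective this) h1
        _ = A'.card * A'.card := by rw [Finset.card_product]
    have hlow : B.card * (A'.card + 1) ≤ 2 * T.card := by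
      rw [hTcard, Finset.mul_sum]
      calc B.card * (A'.card + 1) = ∑ _g ∈ B, (A'.card + 1) := by
            rw [Finset.sum_const, smul_eq_mul]
        _ ≤ ∑ g ∈ B, 2 * (A'.filter (fun a => a * g⁻¹ ∈ A')).card := by
            apply Finset.sum_le_sum
            intro g hg
            exact hcon g hg
    have : 2 * A'.card * (A'.card + 1) ≤ 2 * (A'.card * A'.card) := by
      calc 2 * A'.card * (A'.card + 1) ≤ B.card * (A'.card + 1) :=
            Nat.mul_le_mul_right _ hBr
        _ ≤ 2 * T.card := hlow
        _ ≤ 2 * (A'.card * A'.card) := Nat.mul_le_mul_left _ hTle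
    nlinarith
  obtain ⟨g, hgB, hg⟩ := hkey
  -- the displaced part is large
  have hsplit : (A'.filter (fun a => a * g⁻¹ ∈ A')).card +
      (A'.filter (fun a => a * g⁻¹ ∉ A')).card = A'.card :=
    Finset.card_filter_add_card_filter_not _
  have hbig : A'.card ≤ 2 * (A'.filter (fun a => a * g⁻¹ ∉ A')).card := by omega
  -- the displaced part is bounded by r * |∂A|
  have hgball : g ∈ (S ∪ {1} : Set G) ^ r := (Set.Finite.mem_toFinset hBfin).mp hgB
  have hsmall := csc_translate_aux S hsym A' P
    (fun a s ha hs hna => (Set.Finite.mem_toFinset hPfin).mpr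
      ⟨(Set.Finite.mem_toFinset hA).mp ha, hs, fun hm => hna ((Set.Finite.mem_toFinset hA).mpr hm)⟩)
    r g hgball
  have hfinal : A'.card ≤ 2 * r * P.card := by
    calc A'.card ≤ 2 * (A'.filter (fun a => a * g⁻¹ ∉ A')).card := hbig
      _ ≤ 2 * (r * P.card) := Nat.mul_le_mul_left _ hsmall
      _ = 2 * r * P.card := by ring
  -- conclude over ℝ
  rw [hAcard, hPcard]
  rw [div_le_iff₀ (by positivity : (0:ℝ) < 2 * (r:ℝ))]
  calc (A'.card : ℝ) ≤ ((2 * r * P.card : ℕ) : ℝ) := by exact_mod_cast hfinal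
    _ = (P.card : ℝ) * (2 * r) := by push_cast; ring
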